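/- Fix d ≥ 2. There exists a distribution for a nonnegative random variable t_e such that, letting Y be the minimum of 2d i.i.d. copies of t_e and F_Y its distribution function, the inequality E[Y ∧ t] / (max{t(1 − F_Y(t)), 1}) ≥ t/(2 log t) holds for an unbounded set of t > 0. (For instance, one may take the distribution determined by P(t_e > t) = (log x_n)^{−1/(2d)} for t ∈ [x_{n−1}, x_n) and P(t_e > t) = 1 for t < 3, where x_1 = 3 and x_{n+1} = x_n^{x_n}.) -/

import Mathlib

open MeasureTheory ProbabilityTheory Filter Set

noncomputable def aSeq : ℕ → ℝ
  | 0 => Real.exp 1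
  | n + 1 => Real.exp (aSeq n)

lemma aSeq_one_le (n : ℕ) : 1 ≤ aSeq n := by
  cases n with
  | zero => simpa [aSeq] using Real.one_le_exp (by norm_num)
  | succ n =>
      show (1:ℝ) ≤ Real.exp (aSeq n)
      exact Real.one_le_exp (le_trans zero_le_one (aSeq_one_le n))

lemma aSeq_add_one_le (n : ℕ) : aSeq n + 1 ≤ aSeq (n + 1) := by
  simpa [aSeq, add_comm] using Real.add_one_le_exp (aSeq n)

lemma aSeq_strictMono : StrictMono aSeq :=
  strictMono_nat_of_lt_succ fun n => lt_of_lt_of_le (by linarith [aSeq_add_one_le n]) le_rfl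

lemma aSeq_mono : Monotone aSeq := aSeq_strictMono.monotone

lemma nat_le_aSeq (n : ℕ) : (n : ℝ) + 1 ≤ aSeq n := by
  induction n with
  | zero => simpa using aSeq_one_le 0
  | succ n ih =>
      have := aSeq_add_one_le n
      push_cast
      linarith

lemma log_aSeq_succ (n : ℕ) : Real.log (aSeq (n + 1)) = aSeq n := by
  simp [aSeq, Real.log_exp]

lemma one_le_log_aSeq (n : ℕ) : 1 ≤ Real.log (aSeq n) := by
  cases n with
  | zero => simp [aSeq, Real.log_exp]
  | succ n => rw [log_aSeq_succ]; exact aSeq_one_le n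

lemma nat_le_log_aSeq (n : ℕ) : (n : ℝ) ≤ Real.log (aSeq n) := by
  cases n with
  | zero => simpa using le_trans (by norm_num) (one_le_log_aSeq 0)
  | succ n => rw [log_aSeq_succ]; exact_mod_cast nat_le_aSeq n

noncomputable def gSeq (n : ℕ) : ℝ := (2 * Real.log (aSeq n))⁻¹

lemma gSeq_pos (n : ℕ) : 0 < gSeq n := by
  have := one_le_log_aSeq n
  unfold gSeq; positivity

lemma gSeq_le_one (n : ℕ) : gSeq n ≤ 1 := by
  have h := one_le_log_aSeq n
  rw [gSeq, inv_le_one_iff₀]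
  right; linarith

lemma gSeq_antitone : Antitone gSeq := by
  intro m n hmn
  have h1 := one_le_log_aSeq m
  have h2 : Real.log (aSeq m) ≤ Real.log (aSeq n) :=
    Real.log_le_log (by linarith [aSeq_one_le m]) (aSeq_mono hmn)
  unfold gSeq
  apply inv_anti₀ (by linarith) (by linarith)

noncomputable def sSeq (d n : ℕ) : ℝ := gSeq n ^ ((2 * (d : ℝ))⁻¹)

lemma sSeq_pos (d n : ℕ) : 0 < sSeq d n := Real.rpow_pos_of_pos (gSeq_pos n) _

lemma sSeq_le_one (d n : ℕ) : sSeq d n ≤ 1 :=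
  Real.rpow_le_one (gSeq_pos n).le (gSeq_le_one n) (by positivity)

lemma sSeq_antitone (d : ℕ) : Antitone (sSeq d) := fun m n hmn =>
  Real.rpow_le_rpow (gSeq_pos n).le (gSeq_antitone hmn) (by positivity)

lemma sSeq_pow (d n : ℕ) (hd : d ≠ 0) : sSeq d n ^ (2 * d) = gSeq n := by
  have hdd : (2 * (d : ℝ)) ≠ 0 := by positivity
  rw [sSeq, ← Real.rpow_natCast (gSeq n ^ ((2 * (d : ℝ))⁻¹)) (2 * d),
    ← Real.rpow_mul (gSeq_pos n).le]
  push_cast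
  rw [inv_mul_cancel₀ hdd, Real.rpow_one]

lemma exists_sSeq_le (d : ℕ) (hd : d ≠ 0) {u : ℝ} (hu : 0 < u) : ∃ n, sSeq d n ≤ u := by
  obtain ⟨n, hn⟩ := exists_nat_gt (u ^ (2 * d))⁻¹
  refine ⟨n, ?_⟩
  have hupow : 0 < u ^ (2 * d) := by positivity
  have h1 : gSeq n ≤ u ^ (2 * d) := by
    have hlog := nat_le_log_aSeq n
    have h2 : (u ^ (2 * d))⁻¹ < 2 * Real.log (aSeq n) := by
      have := one_le_log_aSeq n
      nlinarith
    rw [gSeq]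
    have := one_le_log_aSeq n
    calc (2 * Real.log (aSeq n))⁻¹ ≤ ((u ^ (2 * d))⁻¹)⁻¹ := by
          apply inv_anti₀ (by positivity) h2.le
      _ = u ^ (2 * d) := inv_inv _
  calc sSeq d n ≤ (u ^ (2 * d)) ^ ((2 * (d : ℝ))⁻¹) :=
        Real.rpow_le_rpow (gSeq_pos n).le h1 (by positivity)
    _ = u := by
        rw [← Real.rpow_natCast u (2 * d), ← Real.rpow_mul hu.le]
        push_cast
        rw [mul_inv_cancel₀ (by positivity), Real.rpow_one]
noncomputable def valF : ℕ → ℝ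
  | 0 => 0
  | n + 1 => aSeq n

noncomputable def nuF (d : ℕ) (u : ℝ) : ℕ := sInf {n | sSeq d n ≤ u}

noncomputable def fStep (d : ℕ) (u : ℝ) : ℝ := valF (nuF d u)

lemma valF_nonneg (n : ℕ) : 0 ≤ valF n := by
  cases n with
  | zero => simp [valF]
  | succ n => exact le_trans zero_le_one (aSeq_one_le n) |>.trans_eq (by simp [valF])

lemma nuF_fiber_zero (d : ℕ) (hd : d ≠ 0) :
    nuF d ⁻¹' {0} = Iic 0 ∪ Ici (sSeq d 0) := by
  ext u
  simp only [mem_preimage, mem_singleton_iff, mem_union, mem_Iic, mem_Ici, nuF]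
  constructor
  · intro h
    rcases Set.eq_empty_or_nonempty {n | sSeq d n ≤ u} with he | hne
    · left
      by_contra hu
      obtain ⟨n, hn⟩ := exists_sSeq_le d hd (not_le.mp hu)
      exact absurd hn (by simpa using Set.eq_empty_iff_forall_notMem.mp he n)
    · right
      have := Nat.sInf_mem hne
      rwa [h] at this
  · intro h
    rcases h with h | h
    · rw [Nat.sInf_eq_zero]
      right
      apply Set.eq_empty_iff_forall_notMem.mpr
      intro n hn
      have hn' : sSeq d n ≤ u := hn
      linarith [sSeq_pos d n]
    · exact Nat.sInf_eq_zero.mpr (Or.inl h)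

lemma nuF_fiber_succ (d : ℕ) (n : ℕ) :
    nuF d ⁻¹' {n + 1} = Ico (sSeq d (n + 1)) (sSeq d n) := by
  ext u
  simp only [mem_preimage, mem_singleton_iff, mem_Ico, nuF]
  constructor
  · intro h
    have hne : {m | sSeq d m ≤ u}.Nonempty := by
      by_contra hemp
      rw [Set.not_nonempty_iff_eq_empty] at hemp
      rw [hemp] at h
      simp [Nat.sInf_empty] at h
    constructor
    · have := Nat.sInf_mem hne
      rwa [h] at this
    · have hlt : n < sInf {m | sSeq d m ≤ u} := by omega
      exact not_le.mp (Nat.notMem_of_lt_sInf hlt)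
  · rintro ⟨h1, h2⟩
    have hmem : n + 1 ∈ {m | sSeq d m ≤ u} := h1
    have hle : sInf {m | sSeq d m ≤ u} ≤ n + 1 := Nat.sInf_le hmem
    have hge : n + 1 ≤ sInf {m | sSeq d m ≤ u} := by
      by_contra hc
      push_neg at hc
      have hmem' := Nat.sInf_mem ⟨n + 1, hmem⟩
      have : sSeq d n ≤ sSeq d (sInf {m | sSeq d m ≤ u}) :=
        sSeq_antitone d (Nat.lt_succ_iff.mp hc)
      exact absurd (le_trans this hmem') (not_le.mpr h2)
    omega

lemma measurable_nuF (d : ℕ) (hd : d ≠ 0) : Measurable (nuF d) := by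
  apply measurable_to_countable'
  intro n
  cases n with
  | zero => rw [nuF_fiber_zero d hd]; exact measurableSet_Iic.union measurableSet_Ici
  | succ n => rw [nuF_fiber_succ d n]; exact measurableSet_Ico

lemma measurable_fStep (d : ℕ) (hd : d ≠ 0) : Measurable (fStep d) :=
  (measurable_from_top (f := valF)).comp (measurable_nuF d hd)

lemma fStep_nonneg (d : ℕ) (u : ℝ) : 0 ≤ fStep d u := valF_nonneg _

lemma fStep_ge (d : ℕ) (hd : d ≠ 0) {N : ℕ} {u : ℝ} (hu : 0 < u) (hN : u < sSeq d N) :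
    aSeq N ≤ fStep d u := by
  obtain ⟨n, hn⟩ := exists_sSeq_le d hd hu
  have hne : {m | sSeq d m ≤ u}.Nonempty := ⟨n, hn⟩
  have hfind : N < nuF d u := by
    by_contra h
    push_neg at h
    have h1 := Nat.sInf_mem hne
    have h2 : sSeq d N ≤ sSeq d (nuF d u) := sSeq_antitone d h
    have : sSeq d N ≤ u := le_trans h2 h1
    linarith
  obtain ⟨m, hm⟩ := Nat.exists_eq_add_of_lt hfind
  rw [fStep, hm]
  show aSeq N ≤ valF (N + m + 1)
  simpa [valF] using aSeq_mono (Nat.le_add_right N m)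

lemma fStep_gt (d : ℕ) {N : ℕ} {u : ℝ} (h : aSeq N < fStep d u) :
    0 < u ∧ u < sSeq d (N + 1) := by
  rw [fStep] at h
  rcases hk : nuF d u with _ | k
  · rw [hk] at h
    simp only [valF] at h
    linarith [aSeq_one_le N]
  · rw [hk] at h
    simp only [valF] at h
    have hNk : N < k := aSeq_strictMono.lt_iff_lt.mp h
    have hne : {m | sSeq d m ≤ u}.Nonempty := by
      by_contra hemp
      rw [Set.not_nonempty_iff_eq_empty] at hemp
      rw [nuF, hemp, Nat.sInf_empty] at hk
      exact absurd hk (Nat.succ_ne_zero k).symm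
    have hmem := Nat.sInf_mem hne
    rw [show sInf {m | sSeq d m ≤ u} = nuF d u from rfl, hk] at hmem
    have hu : 0 < u := lt_of_lt_of_le (sSeq_pos d (k + 1)) hmem
    refine ⟨hu, ?_⟩
    have := Nat.notMem_of_lt_sInf (show N + 1 < sInf {m | sSeq d m ≤ u} by
      rw [show sInf {m | sSeq d m ≤ u} = nuF d u from rfl, hk]; omega)
    exact not_le.mp this

/-- There is a distribution for the edge-weight `t_e` such that, with `Y` the minimum of `2d`
i.i.d. copies of `t_e`, the ratio `E[Y ∧ t] / (t(1 - F_Y(t)) ∨ 1)` is at least `t / (2 log t)`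
on an unbounded set of `t`. -/
theorem truncated_mean_ratio_large_io (d : ℕ) (hd : 2 ≤ d) :
    ∃ (Ω : Type) (_ : MeasurableSpace Ω) (P : Measure Ω) (_ : IsProbabilityMeasure P)
      (X : Fin (2 * d) → Ω → ℝ),
      (∀ i, Measurable (X i)) ∧
      (∀ i ω, 0 ≤ X i ω) ∧
      iIndepFun X P ∧
      (∀ i j, Measure.map (X i) P = Measure.map (X j) P) ∧
      ∀ T : ℝ, ∃ t : ℝ, T < t ∧ 0 < t ∧
        t / (2 * Real.log t)
          ≤ (∫ ω, min (⨅ i, X i ω) t ∂P) /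
              max (t * (1 - (P {ω | (⨅ i, X i ω) ≤ t}).toReal)) 1 := by
  have hd0 : d ≠ 0 := by omega
  haveI : NeZero (2 * d) := ⟨by omega⟩
  set μ : Measure ℝ := volume.restrict (Ioc (0:ℝ) 1) with hμ
  haveI hPμ : IsProbabilityMeasure μ := ⟨by
    rw [hμ, Measure.restrict_apply_univ, Real.volume_Ioc]
    norm_num⟩
  set P : Measure (Fin (2 * d) → ℝ) := Measure.pi (fun _ => μ) with hP
  haveI : IsProbabilityMeasure P := by rw [hP]; infer_instance
  set X : Fin (2 * d) → (Fin (2 * d) → ℝ) → ℝ := fun i ω => fStep d (ω i) with hX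
  have hfm : Measurable (fStep d) := measurable_fStep d hd0
  have hXm : ∀ i, Measurable (X i) := fun i => hfm.comp (measurable_pi_apply i)
  -- marginal computation
  have hmap : ∀ (B : Set ℝ), MeasurableSet B → ∀ i : Fin (2 * d),
      P ((fun ω => ω i) ⁻¹' B) = μ B := by
    intro B hB i
    have : ((fun ω : Fin (2 * d) → ℝ => ω i) ⁻¹' B)
        = Set.pi univ (Function.update (fun _ => (univ : Set ℝ)) i B) := by
      exact Set.eval_preimage
    rw [this, hP, Measure.pi_pi]
    rw [Finset.prod_eq_single i]
    · simp
    · intro j _ hj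
      simp [Function.update_of_ne hj]
    · simp
  refine ⟨Fin (2 * d) → ℝ, inferInstance, P, inferInstance, X, hXm,
    fun i ω => fStep_nonneg d (ω i), ?_, ?_, ?_⟩
  · -- independence
    rw [iIndepFun_iff_measure_inter_preimage_eq_mul]
    intro S sets hsets
    classical
    have hpre : ∀ i, X i ⁻¹' sets i = (fun ω : Fin (2*d) → ℝ => ω i) ⁻¹' (fStep d ⁻¹' sets i) :=
      fun i => rfl
    have hset : (⋂ i ∈ S, X i ⁻¹' sets i)
        = Set.pi univ (fun i => if i ∈ S then fStep d ⁻¹' sets i else univ) := by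
      ext ω
      simp only [Set.mem_iInter, Set.mem_pi, Set.mem_univ, forall_true_left, mem_preimage]
      constructor
      · intro h i
        split_ifs with hi
        · exact h i hi
        · trivial
      · intro h i hi
        have := h i
        rwa [if_pos hi] at this
    rw [hset, hP, Measure.pi_pi]
    rw [← Finset.prod_subset (Finset.subset_univ S) (fun i _ hi => by simp [if_neg hi])]
    apply Finset.prod_congr rfl
    intro i hi
    rw [if_pos hi, ← hP, hpre i, hmap _ (hfm (hsets i hi)) i]
  · -- identically distributed
    intro i j
    have hmapX : ∀ k : Fin (2 * d), Measure.map (X k) P = Measure.map (fStep d) μ := by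
      intro k
      have : X k = fStep d ∘ (fun ω => ω k) := rfl
      rw [this, ← Measure.map_map hfm (measurable_pi_apply k)]
      congr 1
      apply Measure.ext
      intro B hB
      rw [Measure.map_apply (measurable_pi_apply k) hB]
      exact hmap B hB k
    rw [hmapX i, hmapX j]
  · -- main estimate
    intro T
    obtain ⟨N, hN⟩ := exists_nat_gt T
    have htN : T < aSeq N := lt_of_lt_of_le hN (by linarith [nat_le_aSeq N])
    set t := aSeq N with ht
    have ht1 : 1 ≤ t := aSeq_one_le N
    have ht0 : 0 < t := by linarith
    refine ⟨t, htN, ht0, ?_⟩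
    have hZm : Measurable fun ω : Fin (2*d) → ℝ => ⨅ i, X i ω :=
      Measurable.iInf fun i => hXm i
    -- μ bounds
    have hsub1 : Ioo (0:ℝ) (sSeq d N) ⊆ fStep d ⁻¹' (Ici t) := by
      intro u hu
      exact fStep_ge d hd0 hu.1 hu.2
    have hμ1 : ENNReal.ofReal (sSeq d N) ≤ μ (fStep d ⁻¹' (Ici t)) := by
      have h1 : μ (Ioo (0:ℝ) (sSeq d N)) = ENNReal.ofReal (sSeq d N) := by
        rw [hμ, Measure.restrict_apply measurableSet_Ioo]
        have hss : Ioo (0:ℝ) (sSeq d N) ⊆ Ioc 0 1 :=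
          Set.Ioo_subset_Ioc_self.trans (Set.Ioc_subset_Ioc_right (sSeq_le_one d N))
        rw [Set.inter_eq_left.mpr hss]
        rw [Real.volume_Ioo, sub_zero]
      rw [← h1]
      exact measure_mono hsub1
    have hsub2 : fStep d ⁻¹' (Ioi t) ⊆ Ioo (0:ℝ) (sSeq d (N+1)) := by
      intro u hu
      exact ⟨(fStep_gt d hu).1, (fStep_gt d hu).2⟩
    have hμ2 : μ (fStep d ⁻¹' (Ioi t)) ≤ ENNReal.ofReal (sSeq d (N+1)) := by
      calc μ (fStep d ⁻¹' (Ioi t)) ≤ μ (Ioo (0:ℝ) (sSeq d (N+1))) := measure_mono hsub2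
        _ ≤ volume (Ioo (0:ℝ) (sSeq d (N+1))) := by
            rw [hμ]; exact Measure.restrict_le_self _
        _ = ENNReal.ofReal (sSeq d (N+1)) := by rw [Real.volume_Ioo, sub_zero]
    -- numerator lower bound
    set A : Set (Fin (2*d) → ℝ) := Set.pi univ (fun _ => fStep d ⁻¹' (Ici t)) with hA
    have hAm : MeasurableSet A := MeasurableSet.univ_pi fun _ => hfm measurableSet_Ici
    have hPA : ENNReal.ofReal (gSeq N) ≤ P A := by
      rw [hA, hP, Measure.pi_pi, Finset.prod_const, Finset.card_univ, Fintype.card_fin]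
      calc ENNReal.ofReal (gSeq N) = ENNReal.ofReal (sSeq d N ^ (2*d)) := by
            rw [sSeq_pow d N hd0]
        _ = ENNReal.ofReal (sSeq d N) ^ (2*d) := by
            rw [ENNReal.ofReal_pow (sSeq_pos d N).le]
        _ ≤ μ (fStep d ⁻¹' (Ici t)) ^ (2*d) := pow_le_pow_left' hμ1 _
    have hPA_top : P A ≠ ⊤ := (measure_lt_top P A).ne
    have hPAtoReal : gSeq N ≤ (P A).toReal := by
      have := ENNReal.toReal_mono hPA_top hPA
      rwa [ENNReal.toReal_ofReal (gSeq_pos N).le] at this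
    have hint_ind : ∫ ω, A.indicator (fun _ => t) ω ∂P = (P A).toReal * t := by
      rw [integral_indicator_const _ hAm]
      simp [mul_comm, Measure.real]
    have hZnonneg : ∀ ω, 0 ≤ ⨅ i, X i ω := fun ω =>
      le_ciInf fun i => fStep_nonneg d (ω i)
    have hle_ae : ∀ ω, A.indicator (fun _ => t) ω ≤ min (⨅ i, X i ω) t := by
      intro ω
      by_cases hω : ω ∈ A
      · rw [Set.indicator_of_mem hω]
        refine le_min (le_ciInf fun i => ?_) le_rfl
        have := hω i (Set.mem_univ i)
        exact this
      · rw [Set.indicator_of_notMem hω]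
        exact le_min (hZnonneg ω) ht0.le
    have hint1 : Integrable (fun ω => A.indicator (fun _ => t) ω) P :=
      (integrable_const t).indicator hAm
    have hint2 : Integrable (fun ω => min (⨅ i, X i ω) t) P := by
      apply Integrable.mono' (integrable_const t)
      · exact (hZm.min measurable_const).aestronglyMeasurable
      · apply ae_of_all
        intro ω
        rw [Real.norm_eq_abs, abs_of_nonneg (le_min (hZnonneg ω) ht0.le)]
        exact min_le_right _ _
    have hnum : gSeq N * t ≤ ∫ ω, min (⨅ i, X i ω) t ∂P := by
      calc gSeq N * t ≤ (P A).toReal * t := by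
            apply mul_le_mul_of_nonneg_right hPAtoReal ht0.le
        _ = ∫ ω, A.indicator (fun _ => t) ω ∂P := hint_ind.symm
        _ ≤ ∫ ω, min (⨅ i, X i ω) t ∂P := integral_mono hint1 hint2 hle_ae
    -- denominator
    set S : Set (Fin (2*d) → ℝ) := {ω | (⨅ i, X i ω) ≤ t} with hS
    have hSm : MeasurableSet S := hZm measurableSet_Iic
    have hcompl : Sᶜ ⊆ Set.pi univ (fun _ => (fun u => fStep d u) ⁻¹' (Ioi t)) := by
      intro ω hω
      intro i _
      have hinf : t < ⨅ i, X i ω := not_le.mp hω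
      have hle : (⨅ i, X i ω) ≤ X i ω := ciInf_le (Finite.bddBelow_range _) i
      exact lt_of_lt_of_le hinf hle
    have hPSc : (P Sᶜ).toReal ≤ gSeq (N + 1) := by
      have h1 : P Sᶜ ≤ ENNReal.ofReal (gSeq (N+1)) := by
        calc P Sᶜ ≤ P (Set.pi univ (fun _ => (fun u => fStep d u) ⁻¹' (Ioi t))) :=
              measure_mono hcompl
          _ = μ (fStep d ⁻¹' (Ioi t)) ^ (2*d) := by
              rw [hP, Measure.pi_pi, Finset.prod_const, Finset.card_univ, Fintype.card_fin]
          _ ≤ ENNReal.ofReal (sSeq d (N+1)) ^ (2*d) := pow_le_pow_left' hμ2 _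
          _ = ENNReal.ofReal (sSeq d (N+1) ^ (2*d)) := by
              rw [ENNReal.ofReal_pow (sSeq_pos d (N+1)).le]
          _ = ENNReal.ofReal (gSeq (N+1)) := by rw [sSeq_pow d (N+1) hd0]
      have := ENNReal.toReal_mono ENNReal.ofReal_ne_top h1
      rwa [ENNReal.toReal_ofReal (gSeq_pos (N+1)).le] at this
    have hsum : (P S).toReal + (P Sᶜ).toReal = 1 := by
      have h1 : P S + P Sᶜ = 1 := by
        rw [measure_add_measure_compl hSm]
        exact measure_univ
      have := congrArg ENNReal.toReal h1
      rwa [ENNReal.toReal_add (measure_lt_top P S).ne (measure_lt_top P Sᶜ).ne,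
        ENNReal.toReal_one] at this
    have hden : t * (1 - (P S).toReal) ≤ 1 := by
      have h1 : 1 - (P S).toReal = (P Sᶜ).toReal := by linarith
      rw [h1]
      have hg : gSeq (N + 1) = (2 * t)⁻¹ := by
        rw [gSeq, log_aSeq_succ]
      calc t * (P Sᶜ).toReal ≤ t * gSeq (N+1) := by
            apply mul_le_mul_of_nonneg_left hPSc ht0.le
        _ = t * (2 * t)⁻¹ := by rw [hg]
        _ ≤ 1 := by
            rw [mul_inv, ← mul_assoc]
            rw [mul_comm t]
            rw [mul_assoc]
            rw [mul_inv_cancel₀ (ne_of_gt ht0)]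
            norm_num
    rw [max_eq_right hden, div_one]
    have hlog : t / (2 * Real.log t) = gSeq N * t := by
      rw [gSeq, div_eq_mul_inv, mul_comm]
    rw [hlog]
    exact hnum
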